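/- arXiv:1705.02884 — 4 statements merged into one kernel-verified Lean document; each statement's English description precedes it below -/
import Mathlib

section
/- Suppose a concurrent data structure satisfies CDS-Specific Equivalence: for any concurrent history H and sequential history S, if a method m_x in H and a method m_y in S have equal invocation events and the AbDS in the pre-state of m_x's LP equals the AbDS in the pre-state of m_y, then their response events are equal and the AbDS in the post-state of m_x's LP equals the AbDS in the post-state of m_y. Then for every method m_x (enumerated by LP order), the AbDS in the pre-state of the LP of m_x in H equals the AbDS in the pre-state of m_x in the constructed sequential history CS(H). -/
/-- Methods are enumerated (by LP order) as `m_0, m_1, ...`.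
`preC x`/`postC x` denote the abstract data structure (AbDS) in the pre/post
state of the LP of method `m_x` in the concurrent history `H`; `preS x`/`postS x`
denote the AbDS in the pre/post state of `m_x` in the constructed sequential
history `CS(H)`; `invH, respH` (resp. `invS, respS`) are the invocation and
response events of the methods in `H` (resp. `CS(H)`).  Assuming:
CDS-Specific Equivalence; only LP events change the AbDS (so the AbDS after the
LP of `m_x` equals the AbDS before the LP of `m_{x+1}`); in the sequential
execution the AbDS after the response of `m_x` equals the AbDS before the
invocation of `m_{x+1}`; `H` and `CS(H)` agree on invocation events; and both
start from the same initial AbDS — then for every method `m_x`, the AbDS in the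
pre-state of the LP of `m_x` in `H` equals the AbDS in the pre-state of `m_x`
in `CS(H)`. -/
theorem pre_state_abds_equal
    (A I R : Type)
    (preC postC preS postS : ℕ → A)
    (invH invS : ℕ → I) (respH respS : ℕ → R)
    -- CDS-Specific Equivalence
    (hCDSEquiv : ∀ x, preC x = preS x → invH x = invS x →
        respH x = respS x ∧ postC x = postS x)
    -- only LP events change the AbDS in the concurrent execution
    (hChainC : ∀ x, postC x = preC (x + 1))
    -- sequential execution: AbDS after m_x's response = AbDS before m_{x+1}
    (hChainS : ∀ x, postS x = preS (x + 1))
    -- H and CS(H) agree on all invocation events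
    (hInv : ∀ x, invH x = invS x)
    -- both executions start with the same initial AbDS
    (hInit : preC 0 = preS 0) :
    ∀ x, preC x = preS x := by
  intro x
  induction x with
  | zero => exact hInit
  | succ n ih =>
    rw [← hChainC, ← hChainS]
    exact (hCDSEquiv n ih (hInv n)).2
end

section
/- In any reachable global state S of the lazy list, for every node n in S with n.next ≠ null, the key of n is strictly less than the key of n.next; i.e., the list is strictly sorted by key. -/
/-- A global state of the lazy list.  `val` gives the (immutable) key of each
node, `nxt` its next pointer (`none` = null), `marked` its marked flag,
`lockd` whether it is currently locked, and `mem` whether it is a node of the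
list (has been linked into the list).  `head` and `tail` are the sentinels. -/
structure LazyState (Node : Type) where
  val    : Node → ℤ
  nxt    : Node → Option Node
  marked : Node → Bool
  lockd  : Node → Bool
  mem    : Node → Prop
  head   : Node
  tail   : Node

variable {Node : Type} [DecidableEq Node]

/-- Pointwise function update. -/
def upd {α : Type} (f : Node → α) (n : Node) (a : α) : Node → α :=
  fun m => if m = n then a else f m

/-- `ReachL S n`: node `n` is reachable from `Head` via next pointers. -/
def ReachL (S : LazyState Node) (n : Node) : Prop :=
  Relation.ReflTransGen (fun a b => S.nxt a = some b) S.head n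

/-- The abstract set: unmarked nodes reachable from `Head`. -/
def AbS (S : LazyState Node) : Set Node :=
  {n | ReachL S n ∧ S.marked n = false}

/-- The atomic events of the lazy list that change the global state:
locking/unlocking; creation of a fresh node `n3` (with key strictly between
the keys of the adjacent nodes `n1, n2` located by `Locate`) and setting
`n3.next := n2`; the `Add` LP write `n1.next := n3`; the logical-removal
(marking) LP write `n2.marked := true`; and the physical removal write
`n1.next := n2.next`.  Next pointers are only changed for locked unmarked
nodes; the validation performed by `Locate` (cf. the lemmas of the paper)
guarantees that the successor of the node being removed is unmarked. -/
inductive LStep : LazyState Node → LazyState Node → Prop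
  | lock (S : LazyState Node) (n : Node) :
      LStep S { S with lockd := upd S.lockd n true }
  | unlock (S : LazyState Node) (n : Node) :
      LStep S { S with lockd := upd S.lockd n false }
  | newNode (S : LazyState Node) (n1 n2 n3 : Node) :
      S.lockd n1 = true → S.lockd n2 = true →
      S.marked n1 = false → S.marked n2 = false →
      S.nxt n1 = some n2 →
      ¬ S.mem n3 → ¬ ReachL S n3 → (∀ m, S.nxt m ≠ some n3) →
      S.marked n3 = false →
      S.val n1 < S.val n3 → S.val n3 < S.val n2 →
      LStep S { S with nxt := upd S.nxt n3 (some n2) }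
  | addLP (S : LazyState Node) (n1 n2 n3 : Node) :
      S.lockd n1 = true → S.lockd n2 = true →
      S.marked n1 = false → S.marked n2 = false →
      S.nxt n1 = some n2 →
      ¬ S.mem n3 → ¬ ReachL S n3 → (∀ m, S.nxt m ≠ some n3) →
      S.marked n3 = false → S.nxt n3 = some n2 →
      S.val n1 < S.val n3 → S.val n3 < S.val n2 →
      LStep S { S with nxt := upd S.nxt n1 (some n3),
                       mem := fun m => S.mem m ∨ m = n3 }
  | mark (S : LazyState Node) (n1 n2 : Node) :
      S.lockd n1 = true → S.lockd n2 = true →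
      S.marked n1 = false → S.marked n2 = false →
      S.nxt n1 = some n2 →
      (∀ m, S.nxt n2 = some m → S.marked m = false) →
      LStep S { S with marked := upd S.marked n2 true }
  | remLP (S : LazyState Node) (n1 n2 : Node) :
      S.lockd n1 = true → S.lockd n2 = true →
      S.marked n1 = false → S.marked n2 = true →
      S.nxt n1 = some n2 →
      (∀ m, S.nxt n2 = some m → S.marked m = false) →
      LStep S { S with nxt := upd S.nxt n1 (S.nxt n2) }

/-- The initial state: `Head.next = Tail`, both sentinels unmarked, all other
nodes not yet in the list, `Head` carrying key `-∞` and `Tail` key `+∞`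
(modelled by: `Head`'s key is strictly smaller, and `Tail`'s key strictly
larger, than every other key). -/
def LInit (S : LazyState Node) : Prop :=
  S.head ≠ S.tail ∧
  S.nxt S.head = some S.tail ∧ S.nxt S.tail = none ∧
  (∀ n, n ≠ S.head → n ≠ S.tail → S.nxt n = none) ∧
  (∀ n, S.marked n = false) ∧
  (∀ n, S.mem n ↔ n = S.head ∨ n = S.tail) ∧
  (∀ n, n ≠ S.head → S.val S.head < S.val n) ∧
  (∀ n, n ≠ S.tail → S.val n < S.val S.tail)

/-- A reachable global state of the lazy list. -/
def LReachable (S : LazyState Node) : Prop :=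
  ∃ S0, LInit S0 ∧ Relation.ReflTransGen LStep S0 S

/-- In any reachable global state `S` of the lazy list, for
every node `n` with `n.next ≠ null`, the key of `n` is strictly less than the
key of `n.next`: the list is strictly sorted by key. -/
theorem lazy_list_strictly_sorted (S : LazyState Node)
    (hS : LReachable S) :
    ∀ n n', S.nxt n = some n' → S.val n < S.val n' := by
  obtain ⟨S0, hInit, hsteps⟩ := hS
  have step : ∀ {A B : LazyState Node}, LStep A B →
      (∀ n n', A.nxt n = some n' → A.val n < A.val n') →
      (∀ n n', B.nxt n = some n' → B.val n < B.val n') := by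
    intro A B hAB ih
    cases hAB with
    | lock n => exact ih
    | unlock n => exact ih
    | newNode n1 n2 n3 _ _ _ _ h12 _ _ _ _ h13 h32 =>
      intro n n' hn
      simp only [upd] at hn
      split at hn
      · subst_vars; cases hn; exact h32
      · exact ih n n' hn
    | addLP n1 n2 n3 _ _ _ _ h12 _ _ _ _ _ h13 h32 =>
      intro n n' hn
      simp only [upd] at hn
      split at hn
      · subst_vars; cases hn; exact h13
      · exact ih n n' hn
    | mark n1 n2 _ _ _ _ _ _ => exact ih
    | remLP n1 n2 _ _ _ _ h12 _ =>
      intro n n' hn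
      simp only [upd] at hn
      split at hn
      · subst_vars
        exact lt_trans (ih _ _ h12) (ih _ _ hn)
      · exact ih n n' hn
  have base : ∀ n n', S0.nxt n = some n' → S0.val n < S0.val n' := by
    obtain ⟨hne, hht, hto, hoth, _, _, hh, ht⟩ := hInit
    intro n n' hn
    by_cases h1 : n = S0.head
    · subst h1
      rw [hht] at hn; cases hn
      exact hh _ (Ne.symm hne)
    · by_cases h2 : n = S0.tail
      · subst h2; rw [hto] at hn; cases hn
      · rw [hoth n h1 h2] at hn; cases hn
  induction hsteps with
  | refl => exact base
  | tail _ h ih => exact step h ih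
end

section
/- Once a node of the lazy list is marked, it remains marked in all future states, and its next pointer never changes in any future state. -/
variable {Node : Type} [DecidableEq Node]

private lemma lstep_frozen {Node : Type} [DecidableEq Node]
    {S S' : LazyState Node} (h : LStep S S') (n : Node)
    (hm : S.marked n = true) : S'.marked n = true ∧ S'.nxt n = S.nxt n := by
  cases h with
  | lock m => exact ⟨hm, rfl⟩
  | unlock m => exact ⟨hm, rfl⟩
  | newNode n1 n2 n3 _ _ _ _ _ _ _ _ h9 _ _ =>
      refine ⟨hm, ?_⟩
      simp only [upd]
      rw [if_neg]; rintro rfl; rw [hm] at h9; exact absurd h9 (by simp)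
  | addLP n1 n2 n3 _ _ h3 _ _ _ _ _ _ _ _ _ =>
      refine ⟨hm, ?_⟩
      simp only [upd]
      rw [if_neg]; rintro rfl; rw [hm] at h3; exact absurd h3 (by simp)
  | mark n1 n2 _ _ _ _ _ _ =>
      refine ⟨?_, rfl⟩
      simp only [upd]
      split <;> simp [hm]
  | remLP n1 n2 _ _ h3 _ _ _ =>
      refine ⟨hm, ?_⟩
      simp only [upd]
      rw [if_neg]; rintro rfl; rw [hm] at h3; exact absurd h3 (by simp)

/-- Once a node of the lazy list is marked, it remains marked
in all future states, and its next pointer never changes in any future state. -/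
theorem lazy_list_marked_forever_and_next_frozen (S S' : LazyState Node)
    (hfut : Relation.ReflTransGen LStep S S') :
    ∀ n, S.marked n = true → S'.marked n = true ∧ S'.nxt n = S.nxt n := by
  intro n hm
  induction hfut with
  | refl => exact ⟨hm, rfl⟩
  | tail _ hstep ih =>
      obtain ⟨h1, h2⟩ := ih
      obtain ⟨h3, h4⟩ := lstep_frozen hstep n h1
      exact ⟨h3, h4.trans h2⟩
end

section
/- In the lazy list, an unmarked node can never come to point (via its next field) to a marked node it did not already point to: if in state S node n_p is unmarked, node n_q is marked, and n_p.next ≠ n_q, then in every future state S', n_p.next ≠ n_q. -/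
variable {Node : Type} [DecidableEq Node]

lemma lstep_inv (S S' : LazyState Node) (h : LStep S S') (np nq : Node)
    (hq : S.marked nq = true) (hne : S.nxt np ≠ some nq) :
    S'.marked nq = true ∧ S'.nxt np ≠ some nq := by
  cases h with
  | lock n => exact ⟨hq, hne⟩
  | unlock n => exact ⟨hq, hne⟩
  | newNode n1 n2 n3 _ _ _ hm2 _ _ _ _ _ _ _ =>
    refine ⟨hq, ?_⟩
    simp only [upd]
    split
    · intro hcon
      obtain rfl : n2 = nq := by simpa using hcon
      simp [hq] at hm2
    · exact hne
  | addLP n1 n2 n3 _ _ _ _ _ _ _ _ hm3 _ _ _ =>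
    refine ⟨hq, ?_⟩
    simp only [upd]
    split
    · intro hcon
      obtain rfl : n3 = nq := by simpa using hcon
      simp [hq] at hm3
    · exact hne
  | mark n1 n2 _ _ _ _ _ _ =>
    refine ⟨?_, hne⟩
    simp only [upd]
    split <;> simp [hq]
  | remLP n1 n2 _ _ _ _ _ hsucc =>
    refine ⟨hq, ?_⟩
    simp only [upd]
    split
    · intro hcon
      have := hsucc nq hcon
      simp [hq] at this
    · exact hne

/-- In the lazy list, an unmarked node can never come to
point (via its next field) to a marked node it did not already point to: if in
state `S` node `n_p` is unmarked, node `n_q` is marked, and `n_p.next ≠ n_q`,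
then in every future state `S'`, `n_p.next ≠ n_q`. -/
theorem lazy_list_unmarked_never_points_to_marked
    (S S' : LazyState Node)
    (hfut : Relation.ReflTransGen LStep S S')
    (np nq : Node)
    (hp : S.marked np = false) (hq : S.marked nq = true)
    (hne : S.nxt np ≠ some nq) :
    S'.nxt np ≠ some nq := by
  have main : S'.marked nq = true ∧ S'.nxt np ≠ some nq := by
    induction hfut with
    | refl => exact ⟨hq, hne⟩
    | tail _ hstep ih => exact lstep_inv _ _ hstep np nq ih.1 ih.2
  exact main.2
end
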